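/- Let k be a field of characteristic zero, let u_1,…,u_m ∈ ℤ[x]^n, and let θ_U : AddMonoidAlgebra k (ℕ[x]^m) → AddMonoidAlgebra k (ℤ[x]^n) be the monomial substitution homomorphism with θ_U(Y^w) = T^{∑_i w_i·u_i}. Let S = ℕ[x]({u_1,…,u_m}) = {∑_{i=1}^m g_i·u_i : g_i ∈ ℕ[x]} be the affine ℕ[x]-semimodule generated by the u_i. Then the range of θ_U equals the k-linear span of the monomials {T^u : u ∈ S} inside AddMonoidAlgebra k (ℤ[x]^n); consequently θ_U induces a k-algebra isomorphism (AddMonoidAlgebra k (ℕ[x]^m)) / ker θ_U ≅ k[S], i.e., the difference coordinate ring of the toric difference variety X_U is the semimodule algebra k[S]. (Core of Theorem 3.5.) -/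

import Mathlib

open Polynomial AddMonoidAlgebra

/-- The additive monoid homomorphism `ℕ[x]^m →+ ℤ[x]^n`, `w ↦ ∑ i, w i • u i`. -/
noncomputable def expMap {m n : ℕ} (u : Fin m → Fin n → Polynomial ℤ) :
    (Fin m → Polynomial ℕ) →+ (Fin n → Polynomial ℤ) where
  toFun w := ∑ i, ((w i).map (Nat.castRingHom ℤ)) • u i
  map_zero' := by simp
  map_add' a b := by
    simp only [Pi.add_apply, Polynomial.map_add, add_smul]
    exact Finset.sum_add_distrib

/-- The monomial substitution homomorphism `θ_U` with `θ_U(Y^w) = T^{∑ i, w i • u i}`. -/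
noncomputable def thetaU (k : Type*) [CommRing k] {m n : ℕ}
    (u : Fin m → Fin n → Polynomial ℤ) :
    AddMonoidAlgebra k (Fin m → Polynomial ℕ) →ₐ[k]
      AddMonoidAlgebra k (Fin n → Polynomial ℤ) :=
  AddMonoidAlgebra.mapDomainAlgHom k k (expMap u)

/-- The affine `ℕ[x]`-semimodule `S = ℕ[x]({u_1,…,u_m})` generated by `u_1,…,u_m`,
as an additive submonoid of `ℤ[x]^n`. -/
noncomputable def genSemimodule {m n : ℕ} (u : Fin m → Fin n → Polynomial ℤ) :
    AddSubmonoid (Fin n → Polynomial ℤ) where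
  carrier := {x | ∃ g : Fin m → Polynomial ℕ, x = ∑ i, ((g i).map (Nat.castRingHom ℤ)) • u i}
  zero_mem' := ⟨0, by simp⟩
  add_mem' := by
    rintro a b ⟨g, rfl⟩ ⟨h, rfl⟩
    exact ⟨g + h, by
      simp only [Pi.add_apply, Polynomial.map_add, add_smul]
      rw [Finset.sum_add_distrib]⟩

/-- The corestriction of `expMap u` to the semimodule it generates. -/
noncomputable def expMap' {m n : ℕ} (u : Fin m → Fin n → Polynomial ℤ) :
    (Fin m → Polynomial ℕ) →+ (genSemimodule u) :=
  AddMonoidHom.codRestrict (expMap u) (genSemimodule u) (fun w => ⟨w, rfl⟩)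

lemma expMap'_surjective {m n : ℕ} (u : Fin m → Fin n → Polynomial ℤ) :
    Function.Surjective (expMap' u) := by
  rintro ⟨x, g, rfl⟩
  exact ⟨g, rfl⟩

lemma subtype_comp_expMap' {m n : ℕ} (u : Fin m → Fin n → Polynomial ℤ) :
    ((genSemimodule u).subtype).comp (expMap' u) = expMap u := rfl

/-- Core of Theorem 3.5: the range of `θ_U` is the `k`-linear span of the monomials `T^u`
for `u` in the affine `ℕ[x]`-semimodule `S` generated by `U`; consequently the difference
coordinate ring of the toric difference variety `X_U` is the semimodule algebra `k[S]`. -/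
theorem range_thetaU_eq_span_semimodule_monomials
    (k : Type*) [Field k] [CharZero k] {m n : ℕ}
    (u : Fin m → Fin n → Polynomial ℤ) :
    (Set.range (thetaU k u) : Set (AddMonoidAlgebra k (Fin n → Polynomial ℤ))) =
      ↑(Submodule.span k {a : AddMonoidAlgebra k (Fin n → Polynomial ℤ) |
          ∃ s ∈ genSemimodule u, a = AddMonoidAlgebra.single s 1}) ∧
    Nonempty ((AddMonoidAlgebra k (Fin m → Polynomial ℕ) ⧸ RingHom.ker (thetaU k u)) ≃ₐ[k]
      AddMonoidAlgebra k (genSemimodule u)) := by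
  have happ : ∀ p, thetaU k u p = AddMonoidAlgebra.mapDomain (expMap u) p := fun p => rfl
  constructor
  · ext a
    constructor
    · rintro ⟨p, rfl⟩
      rw [SetLike.mem_coe]
      induction p using AddMonoidAlgebra.induction_linear with
      | zero => simp only [map_zero]; exact Submodule.zero_mem _
      | add f g hf hg => rw [map_add]; exact Submodule.add_mem _ hf hg
      | single w c =>
        have : thetaU k u (AddMonoidAlgebra.single w c) = c • AddMonoidAlgebra.single (expMap u w) (1 : k) := by
          rw [happ, AddMonoidAlgebra.mapDomain_single, AddMonoidAlgebra.smul_single, smul_eq_mul, mul_one]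
        rw [this]
        exact Submodule.smul_mem _ _ (Submodule.subset_span ⟨expMap u w, ⟨w, rfl⟩, rfl⟩)
    · intro ha
      rw [SetLike.mem_coe] at ha
      have hle : Submodule.span k {a : AddMonoidAlgebra k (Fin n → Polynomial ℤ) |
          ∃ s ∈ genSemimodule u, a = AddMonoidAlgebra.single s 1} ≤
          Subalgebra.toSubmodule (thetaU k u).range := by
        rw [Submodule.span_le]
        rintro _ ⟨s, ⟨g, rfl⟩, rfl⟩
        refine ⟨AddMonoidAlgebra.single g 1, ?_⟩
        show thetaU k u (AddMonoidAlgebra.single g 1) = _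
        rw [happ, AddMonoidAlgebra.mapDomain_single]
        rfl
      exact hle ha
  · have hcomp : thetaU k u =
        (mapDomainAlgHom k k (genSemimodule u).subtype).comp
          (mapDomainAlgHom k k (expMap' u)) := by
      rw [← mapDomainAlgHom_comp, subtype_comp_expMap']
      rfl
    have hsurj : Function.Surjective (mapDomainAlgHom k k (expMap' u) :
        AddMonoidAlgebra k (Fin m → Polynomial ℕ) →ₐ[k]
          AddMonoidAlgebra k (genSemimodule u)) := by
      intro y
      refine ⟨AddMonoidAlgebra.mapDomain (Function.surjInv (expMap'_surjective u)) y, ?_⟩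
      show AddMonoidAlgebra.mapDomain _ (AddMonoidAlgebra.mapDomain _ y) = y
      apply AddMonoidAlgebra.coeff_injective
      simp only [AddMonoidAlgebra.coeff_mapDomain]
      rw [← Finsupp.mapDomain_comp]
      have : (expMap' u) ∘ (Function.surjInv (expMap'_surjective u)) = id := by
        funext z
        exact Function.surjInv_eq (expMap'_surjective u) z
      rw [this, Finsupp.mapDomain_id]
    have hinj : Function.Injective (mapDomainAlgHom k k (genSemimodule u).subtype :
        AddMonoidAlgebra k (genSemimodule u) →ₐ[k]
          AddMonoidAlgebra k (Fin n → Polynomial ℤ)) :=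
      AddMonoidAlgebra.mapDomain_injective Subtype.coe_injective
    have hker : RingHom.ker (thetaU k u) = RingHom.ker (mapDomainAlgHom k k (expMap' u) :
        AddMonoidAlgebra k (Fin m → Polynomial ℕ) →ₐ[k]
          AddMonoidAlgebra k (genSemimodule u)) := by
      ext x
      simp only [RingHom.mem_ker, hcomp, AlgHom.coe_comp, Function.comp_apply]
      constructor
      · intro h
        apply hinj
        rw [h, map_zero]
      · intro h
        rw [h, map_zero]
    rw [hker]
    exact ⟨Ideal.quotientKerAlgEquivOfSurjective hsurj⟩
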